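/- Let A = (a_{ij}) be an n×n stochastic matrix (entrywise nonnegative with every row sum equal to 1). For each j, let x_j denote the sum of the j-th column of A and let a_j denote the smallest entry of the j-th column of A. If x_j ≤ 1 + n·a_j for every j = 1, ..., n, then the matrix B = A − J_n·A + J_n is doubly stochastic (entrywise nonnegative with all row sums and column sums equal to 1) and B has the same characteristic polynomial as A. -/

import Mathlib

open Matrix Polynomial Finset

/-- The matrix `J_n`: every entry equal to `1/n`. -/
noncomputable def Jmat (n : ℕ) : Matrix (Fin n) (Fin n) ℝ :=
  Matrix.of fun _ _ => (1 : ℝ) / n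

/-- Evaluating the characteristic polynomial at a point. -/
lemma my_eval_charpoly {n : ℕ} (M : Matrix (Fin n) (Fin n) ℝ) (x : ℝ) :
    M.charpoly.eval x = ((x • (1 : Matrix (Fin n) (Fin n) ℝ) - M)).det := by
  rw [Matrix.charpoly, ← Polynomial.coe_evalRingHom, RingHom.map_det]
  congr 1
  ext i j
  by_cases h : i = j
  · subst h
    simp [Matrix.charmatrix_apply_eq, Matrix.one_apply]
  · simp [Matrix.charmatrix_apply_ne _ _ _ h, Matrix.one_apply, h]

lemma total_sum {n : ℕ} (A : Matrix (Fin n) (Fin n) ℝ) (hrow : ∀ i, ∑ j, A i j = 1) :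
    ∑ j, ∑ i, A i j = (n : ℝ) := by
  rw [Finset.sum_comm]
  simp [hrow]

lemma Jmul {n : ℕ} (A : Matrix (Fin n) (Fin n) ℝ) (i j : Fin n) :
    (Jmat n * A) i j = (∑ k, A k j) / n := by
  rw [Matrix.mul_apply, Finset.sum_div]
  refine Finset.sum_congr rfl fun k _ => ?_
  simp only [Jmat, Matrix.of_apply]
  ring

lemma key_det {n : ℕ} (hn : 0 < n) (A : Matrix (Fin n) (Fin n) ℝ)
    (hrow : ∀ i, ∑ j, A i j = 1) (x : ℝ) (hx : x ≠ 1) :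
    (x • (1 : Matrix (Fin n) (Fin n) ℝ) - (A - Jmat n * A + Jmat n)).det =
    (x • (1 : Matrix (Fin n) (Fin n) ℝ) - A).det := by
  set r : Fin n → ℝ := fun j => (1 - ∑ i, A i j) / n with hr
  set c : ℝ := -(x - 1)⁻¹ with hc
  have hn' : (n : ℝ) ≠ 0 := Nat.cast_ne_zero.mpr hn.ne'
  have hx1 : x - 1 ≠ 0 := sub_ne_zero.mpr hx
  have hfac : x • (1 : Matrix (Fin n) (Fin n) ℝ) - (A - Jmat n * A + Jmat n) =
      (x • (1 : Matrix (Fin n) (Fin n) ℝ) - A) *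
      (1 + Matrix.replicateCol Unit (c • fun _ => (1:ℝ)) * Matrix.replicateRow Unit r) := by
    ext i j
    rw [Matrix.mul_apply]
    have expand : ∀ k, (x • (1 : Matrix (Fin n) (Fin n) ℝ) - A) i k *
        (((1 : Matrix (Fin n) (Fin n) ℝ) + Matrix.replicateCol Unit (c • fun _ => (1:ℝ)) *
          Matrix.replicateRow Unit r : Matrix (Fin n) (Fin n) ℝ)) k j
        = (x * (1 : Matrix (Fin n) (Fin n) ℝ) i k - A i k) * (1 : Matrix (Fin n) (Fin n) ℝ) k j
          + (x * (1 : Matrix (Fin n) (Fin n) ℝ) i k - A i k) * (c * r j) := by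
      intro k
      simp only [Matrix.add_apply, Matrix.sub_apply, Matrix.smul_apply, smul_eq_mul,
        Matrix.mul_apply, Matrix.replicateCol_apply, Matrix.replicateRow_apply, Pi.smul_apply,
        Finset.univ_unique, Finset.sum_singleton]
      ring
    rw [Finset.sum_congr rfl fun k _ => expand k, Finset.sum_add_distrib]
    have h1 : ∑ k, (x * (1 : Matrix (Fin n) (Fin n) ℝ) i k - A i k) *
        (1 : Matrix (Fin n) (Fin n) ℝ) k j
        = x * (1 : Matrix (Fin n) (Fin n) ℝ) i j - A i j := by
      rw [show (fun k => (x * (1 : Matrix (Fin n) (Fin n) ℝ) i k - A i k) *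
          (1 : Matrix (Fin n) (Fin n) ℝ) k j) = fun k =>
          if k = j then (x * (1 : Matrix (Fin n) (Fin n) ℝ) i k - A i k) else 0 from
        funext fun k => by by_cases h : k = j <;> simp [Matrix.one_apply, h]]
      simp
    have h2 : ∑ k, (x * (1 : Matrix (Fin n) (Fin n) ℝ) i k - A i k) * (c * r j)
        = (x - 1) * (c * r j) := by
      rw [← Finset.sum_mul]
      congr 1
      simp [Matrix.one_apply, hrow i]
    rw [h1, h2]
    have hcr : (x - 1) * (c * r j) = -r j := by
      rw [← mul_assoc, hc]
      field_simp
    rw [hcr, Matrix.sub_apply, Matrix.add_apply, Matrix.sub_apply, Jmul]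
    simp only [Matrix.smul_apply, Matrix.one_apply, smul_eq_mul, Jmat, Matrix.of_apply, hr]
    rw [sub_div]
    ring
  rw [hfac, Matrix.det_mul, Matrix.det_one_add_replicateCol_mul_replicateRow]
  have : r ⬝ᵥ (c • fun _ => (1:ℝ)) = 0 := by
    simp only [dotProduct, Pi.smul_apply, smul_eq_mul, mul_one]
    rw [← Finset.sum_mul, hr]
    have : ∑ j : Fin n, (1 - ∑ i, A i j) / n = 0 := by
      rw [← Finset.sum_div, Finset.sum_sub_distrib, total_sum A hrow]
      simp
    rw [this, zero_mul]
  rw [this, add_zero, mul_one]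

/-- Let `A` be an `n × n` stochastic matrix.  If for every column `j` the column sum
`x_j = Σ_i a_{ij}` and the smallest column entry `a_j = ⨅ i, a_{ij}` satisfy
`x_j ≤ 1 + n·a_j`, then `B = A - J_n·A + J_n` is doubly stochastic and has the same
characteristic polynomial as `A`. -/
theorem stmt9 (n : ℕ) (A : Matrix (Fin n) (Fin n) ℝ)
    (hA : ∀ i j, 0 ≤ A i j) (hrow : ∀ i, ∑ j, A i j = 1)
    (hcond : ∀ j, ∑ i, A i j ≤ 1 + n * ⨅ i, A i j) :
    (∀ i j, 0 ≤ (A - Jmat n * A + Jmat n) i j) ∧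
    (∀ i, ∑ j, (A - Jmat n * A + Jmat n) i j = 1) ∧
    (∀ j, ∑ i, (A - Jmat n * A + Jmat n) i j = 1) ∧
    (A - Jmat n * A + Jmat n).charpoly = A.charpoly := by
  have hB : ∀ i j, (A - Jmat n * A + Jmat n) i j = A i j - (∑ k, A k j) / n + 1 / n := by
    intro i j
    rw [Matrix.add_apply, Matrix.sub_apply, Jmul]
    simp [Jmat]
  refine ⟨?_, ?_, ?_, ?_⟩
  · intro i j
    have hn : 0 < n := i.pos
    have hn' : (0:ℝ) < n := Nat.cast_pos.mpr hn
    rw [hB]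
    have hinf : (⨅ k, A k j) ≤ A i j :=
      ciInf_le (Set.finite_range fun k => A k j).bddBelow i
    have h := hcond j
    have : (∑ k, A k j) / n ≤ 1 / n + A i j := by
      rw [div_le_iff₀ hn']
      calc ∑ k, A k j ≤ 1 + n * ⨅ k, A k j := h
        _ ≤ 1 + n * A i j := by nlinarith
        _ = (1 / n + A i j) * n := by field_simp
    linarith
  · intro i
    have hn : 0 < n := i.pos
    have hn' : (0:ℝ) ≠ 0 → True := fun _ => trivial
    have hnn : (n:ℝ) ≠ 0 := Nat.cast_ne_zero.mpr hn.ne'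
    simp only [hB]
    rw [Finset.sum_add_distrib, Finset.sum_sub_distrib, hrow, ← Finset.sum_div,
      total_sum A hrow]
    field_simp
    simp [hnn]
  · intro j
    have hn : 0 < n := j.pos
    have hnn : (n:ℝ) ≠ 0 := Nat.cast_ne_zero.mpr hn.ne'
    simp only [hB]
    rw [Finset.sum_add_distrib, Finset.sum_sub_distrib, Finset.sum_const, Finset.sum_const]
    simp only [Finset.card_univ, Fintype.card_fin, nsmul_eq_mul]
    field_simp
    ring
  · rcases Nat.eq_zero_or_pos n with h0 | hn
    · subst h0
      congr 1
      ext i j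
      exact absurd i.2 (by omega)
    · apply Polynomial.eq_of_infinite_eval_eq
      apply Set.Infinite.mono (s := {x : ℝ | x ≠ 1})
      · intro x hx
        simp only [Set.mem_setOf_eq]
        rw [my_eval_charpoly, my_eval_charpoly]
        exact key_det hn A hrow x hx
      · exact Set.Finite.infinite_compl (Set.finite_singleton 1)
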